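/- Let ξ₄ : [0,∞) → ℝ³ be continuously differentiable, let k₄ > 0, and define the filtered error η₂(t) = ξ₄'(t) + k₄·ξ₄(t). Let Γ₂d : [0,∞) → ℝ³ be continuously differentiable with ‖Γ₂d(t)‖ ≤ κ₁ and ‖Γ₂d'(t)‖ ≤ κ₂ for all t ≥ 0. If the constant gain λ₂ satisfies λ₂ ≥ κ₁ + κ₂/k₄, then for every t ≥ 0 the auxiliary function R₂(s) = ⟨η₂(s), Γ₂d(s) − λ₂·sgn(η₂(s))⟩ satisfies ∫₀ᵗ R₂(s) ds ≤ λ₂·‖ξ₄(0)‖₁ − ⟨ξ₄(0), Γ₂d(0)⟩. -/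

import Mathlib

open scoped RealInnerProductSpace

/-- The scalar signum function: `sgn σ = 1` for `σ > 0`, `0` at `0`, `-1` for `σ < 0`. -/
noncomputable def sgn (σ : ℝ) : ℝ := if 0 < σ then 1 else if σ < 0 then -1 else 0

/-- Componentwise signum of a vector in ℝ³. -/
noncomputable def vsgn (v : EuclideanSpace ℝ (Fin 3)) : EuclideanSpace ℝ (Fin 3) :=
  WithLp.toLp 2 (fun i => sgn (v i))

lemma self_mul_sgn (x : ℝ) : x * sgn x = |x| := by
  unfold sgn
  rcases lt_trichotomy x 0 with h | h | h
  · simp [not_lt.2 h.le, h, abs_of_neg h]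
  · simp [h]
  · simp [h, abs_of_pos h]

/-- Key scalar inequality: for `f` C¹ and `k > 0`,
`|f t| - |f 0| + k∫|f| ≤ ∫|f' + kf|`. -/
lemma key_scalar (f : ℝ → ℝ) (hfd : Differentiable ℝ f) (hf' : Continuous (deriv f))
    (k : ℝ) (hk : 0 < k) (t : ℝ) (ht : 0 ≤ t) :
    |f t| - |f 0| + k * ∫ s in (0:ℝ)..t, |f s| ≤ ∫ s in (0:ℝ)..t, |deriv f s + k * f s| := by
  have hfc : Continuous f := hfd.continuous
  have hint_f : IntervalIntegrable (fun s => |f s|) MeasureTheory.volume 0 t :=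
    (hfc.abs).intervalIntegrable 0 t
  have hint_g : IntervalIntegrable (fun s => |deriv f s + k * f s|) MeasureTheory.volume 0 t :=
    ((hf'.add (continuous_const.mul hfc)).abs).intervalIntegrable 0 t
  refine le_of_forall_pos_le_add fun δ hδ => ?_
  set ε : ℝ := δ / (1 + k * t) with hεdef
  have hden : (0:ℝ) < 1 + k * t := by positivity
  have hε : 0 < ε := div_pos hδ hden
  set u : ℝ → ℝ := fun s => Real.sqrt ((f s)^2 + ε^2) with hu
  have hupos : ∀ s, 0 < u s := fun s => Real.sqrt_pos.2 (by positivity)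
  have husq : ∀ s, (u s)^2 = (f s)^2 + ε^2 := fun s => Real.sq_sqrt (by positivity)
  have habs_le : ∀ s, |f s| ≤ u s := by
    intro s
    rw [← Real.sqrt_sq_eq_abs]
    exact Real.sqrt_le_sqrt (by nlinarith [sq_nonneg ε])
  have hεle : ∀ s, ε ≤ u s := by
    intro s
    rw [show ε = Real.sqrt (ε^2) from (Real.sqrt_sq hε.le).symm]
    exact Real.sqrt_le_sqrt (by nlinarith [sq_nonneg (f s)])
  set u' : ℝ → ℝ := fun s => f s * deriv f s / u s with hu'
  have hder : ∀ s, HasDerivAt u (u' s) s := by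
    intro s
    have hg : HasDerivAt (fun s => (f s)^2 + ε^2) (2 * f s * deriv f s) s := by
      have := ((hfd s).hasDerivAt.pow 2)
      simpa [mul_comm, mul_assoc, mul_left_comm] using this.add_const (ε^2)
    have hne : (f s)^2 + ε^2 ≠ 0 := by positivity
    have := (Real.hasDerivAt_sqrt hne).comp s hg
    have hus : u s ≠ 0 := (hupos s).ne'
    refine this.congr_deriv ?_
    have hus' : √(f s ^ 2 + ε ^ 2) ≠ 0 := hus
    show _ = f s * deriv f s / √(f s ^ 2 + ε ^ 2)
    field_simp
  have hu'c : Continuous u' := by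
    have huc : Continuous u := ((hfc.pow 2).add continuous_const).sqrt
    exact ((hfc.mul hf').div huc fun s => (hupos s).ne')
  have hftc : ∫ s in (0:ℝ)..t, u' s = u t - u 0 :=
    intervalIntegral.integral_eq_sub_of_hasDerivAt (fun s _ => hder s)
      (hu'c.intervalIntegrable 0 t)
  have hbound : ∀ s, u' s ≤ |deriv f s + k * f s| + k * ε - k * u s := by
    intro s
    have hus := hupos s
    rw [hu']
    rw [div_le_iff₀ hus]
    have h1 : f s * (deriv f s + k * f s) ≤ u s * |deriv f s + k * f s| := by
      calc f s * (deriv f s + k * f s) ≤ |f s * (deriv f s + k * f s)| := le_abs_self _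
        _ = |f s| * |deriv f s + k * f s| := abs_mul _ _
        _ ≤ u s * |deriv f s + k * f s| := by
            exact mul_le_mul_of_nonneg_right (habs_le s) (abs_nonneg _)
    have h2 : k * ε^2 ≤ k * ε * u s := by
      have h := hεle s
      nlinarith [mul_pos hk hε]
    nlinarith [husq s]
  have hmono : ∫ s in (0:ℝ)..t, u' s ≤
      ∫ s in (0:ℝ)..t, (|deriv f s + k * f s| + k * ε - k * u s) := by
    apply intervalIntegral.integral_mono_on ht (hu'c.intervalIntegrable 0 t)
    · have huc : Continuous u := ((hfc.pow 2).add continuous_const).sqrt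
      exact (((hf'.add (continuous_const.mul hfc)).abs.add continuous_const).sub
        (continuous_const.mul huc)).intervalIntegrable 0 t
    · exact fun s _ => hbound s
  have huc : Continuous u := ((hfc.pow 2).add continuous_const).sqrt
  have hsplit : ∫ s in (0:ℝ)..t, (|deriv f s + k * f s| + k * ε - k * u s) =
      (∫ s in (0:ℝ)..t, |deriv f s + k * f s|) + k * ε * t - k * ∫ s in (0:ℝ)..t, u s := by
    rw [intervalIntegral.integral_sub, intervalIntegral.integral_add hint_g
      (intervalIntegrable_const), intervalIntegral.integral_const,
      intervalIntegral.integral_const_mul]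
    · simp [smul_eq_mul]
      ring
    · exact (hint_g.add intervalIntegrable_const)
    · exact (continuous_const.mul huc).intervalIntegrable 0 t
  have hintle : ∫ s in (0:ℝ)..t, |f s| ≤ ∫ s in (0:ℝ)..t, u s := by
    apply intervalIntegral.integral_mono_on ht hint_f (huc.intervalIntegrable 0 t)
    exact fun s _ => habs_le s
  have hu0 : u 0 ≤ |f 0| + ε := by
    rw [hu]
    rw [show |f 0| + ε = Real.sqrt ((|f 0| + ε)^2) from
      (Real.sqrt_sq (by positivity)).symm]
    apply Real.sqrt_le_sqrt
    nlinarith [abs_nonneg (f 0), sq_abs (f 0)]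
  have hεδ : ε * (1 + k * t) = δ := by
    rw [hεdef, div_mul_cancel₀ _ hden.ne']
  nlinarith [habs_le t, hftc, hmono, hsplit, hintle, hu0,
    mul_le_mul_of_nonneg_left hintle hk.le]

/-- Euclidean norm is at most the ℓ¹ norm on `ℝ³`. -/
lemma norm_le_sum_abs (v : EuclideanSpace ℝ (Fin 3)) : ‖v‖ ≤ ∑ i, |v i| := by
  rw [EuclideanSpace.norm_eq]
  rw [show ∑ i, |v i| = Real.sqrt ((∑ i, |v i|)^2) from
    (Real.sqrt_sq (Finset.sum_nonneg fun i _ => abs_nonneg _)).symm]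
  apply Real.sqrt_le_sqrt
  simp only [Real.norm_eq_abs, Fin.sum_univ_three]
  nlinarith [abs_nonneg (v 0), abs_nonneg (v 1), abs_nonneg (v 2),
    sq_abs (v 0), sq_abs (v 1), sq_abs (v 2)]

/-- RISE integral inequality for the rotational loop (Lemma 1, (R2ineq)):
if `lam₂ ≥ κ₁ + κ₂ / k₄`, then for all `t ≥ 0`,
`∫₀ᵗ ⟨η₂(s), Γ₂d(s) − lam₂ sgn(η₂(s))⟩ ds ≤ lam₂ ‖ξ₄(0)‖₁ − ⟨ξ₄(0), Γ₂d(0)⟩`. -/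
theorem rise_integral_inequality_rotational
    (ξ₄ Γ₂d : ℝ → EuclideanSpace ℝ (Fin 3)) (k₄ κ₁ κ₂ lam₂ : ℝ)
    (hk₄ : 0 < k₄)
    (hξ₄ : ContDiff ℝ 1 ξ₄)
    (hΓ : ContDiff ℝ 1 Γ₂d)
    (hΓ_bnd : ∀ t : ℝ, 0 ≤ t → ‖Γ₂d t‖ ≤ κ₁)
    (hΓ'_bnd : ∀ t : ℝ, 0 ≤ t → ‖deriv Γ₂d t‖ ≤ κ₂)
    (hlam₂ : κ₁ + κ₂ / k₄ ≤ lam₂)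
    (η₂ : ℝ → EuclideanSpace ℝ (Fin 3))
    (hη₂ : ∀ t : ℝ, η₂ t = deriv ξ₄ t + k₄ • ξ₄ t)
    (R₂ : ℝ → ℝ)
    (hR₂ : ∀ s : ℝ, R₂ s = ⟪η₂ s, Γ₂d s - lam₂ • vsgn (η₂ s)⟫) :
    ∀ t : ℝ, 0 ≤ t →
      ∫ s in (0:ℝ)..t, R₂ s ≤ lam₂ * (∑ i, |ξ₄ 0 i|) - ⟪ξ₄ 0, Γ₂d 0⟫ := by
  intro t ht
  -- basic facts
  have hξd : Differentiable ℝ ξ₄ := hξ₄.differentiable one_ne_zero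
  have hΓd : Differentiable ℝ Γ₂d := hΓ.differentiable one_ne_zero
  have hξc : Continuous ξ₄ := hξd.continuous
  have hΓc : Continuous Γ₂d := hΓd.continuous
  have hξ'c : Continuous (deriv ξ₄) := hξ₄.continuous_deriv le_rfl
  have hΓ'c : Continuous (deriv Γ₂d) := hΓ.continuous_deriv le_rfl
  have hηc : Continuous η₂ := by
    have : η₂ = fun s => deriv ξ₄ s + k₄ • ξ₄ s := funext hη₂
    rw [this]
    exact hξ'c.add (hξc.const_smul k₄)
  have hκ₁ : 0 ≤ κ₁ := le_trans (norm_nonneg _) (hΓ_bnd 0 le_rfl)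
  have hκ₂ : 0 ≤ κ₂ := le_trans (norm_nonneg _) (hΓ'_bnd 0 le_rfl)
  have hlam_nonneg : 0 ≤ lam₂ := by
    have : 0 ≤ κ₂ / k₄ := div_nonneg hκ₂ hk₄.le
    linarith
  -- components
  have hcompd : ∀ (i : Fin 3) (s : ℝ), HasDerivAt (fun s => ξ₄ s i) (deriv ξ₄ s i) s := by
    intro i s
    exact (EuclideanSpace.proj (𝕜 := ℝ) i).hasFDerivAt.comp_hasDerivAt s (hξd s).hasDerivAt
  have hderiv_comp : ∀ (i : Fin 3), deriv (fun s => ξ₄ s i) = fun s => deriv ξ₄ s i := by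
    intro i
    funext s
    exact (hcompd i s).deriv
  have hηcomp : ∀ (i : Fin 3) (s : ℝ), η₂ s i = deriv ξ₄ s i + k₄ * ξ₄ s i := by
    intro i s
    rw [hη₂]
    simp [PiLp.add_apply, PiLp.smul_apply]
  -- per-component key inequality
  have hkey : ∀ i : Fin 3,
      |ξ₄ t i| - |ξ₄ 0 i| + k₄ * ∫ s in (0:ℝ)..t, |ξ₄ s i|
        ≤ ∫ s in (0:ℝ)..t, |η₂ s i| := by
    intro i
    have h := key_scalar (fun s => ξ₄ s i)
      (fun s => (hcompd i s).differentiableAt)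
      (by rw [hderiv_comp i]; exact (EuclideanSpace.proj (𝕜 := ℝ) i).continuous.comp hξ'c)
      k₄ hk₄ t ht
    have : (fun s => |deriv (fun s => ξ₄ s i) s + k₄ * ξ₄ s i|) = fun s => |η₂ s i| := by
      funext s
      rw [hderiv_comp i, hηcomp i s]
    rw [this] at h
    exact h
  -- rewrite R₂ as a continuous function
  have hR₂' : ∀ s, R₂ s = ⟪η₂ s, Γ₂d s⟫ - lam₂ * ∑ i, |η₂ s i| := by
    intro s
    rw [hR₂ s, inner_sub_right, real_inner_smul_right]
    congr 1
    congr 1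
    rw [PiLp.inner_apply]
    simp only [RCLike.inner_apply, conj_trivial, vsgn]
    exact Finset.sum_congr rfl fun i _ => (mul_comm _ _).trans (self_mul_sgn (η₂ s i))
  -- continuity of components of η₂
  have hηic : ∀ i : Fin 3, Continuous fun s => |η₂ s i| := fun i =>
    ((EuclideanSpace.proj (𝕜 := ℝ) i).continuous.comp hηc).abs
  have hξic : ∀ i : Fin 3, Continuous fun s => |ξ₄ s i| := fun i =>
    ((EuclideanSpace.proj (𝕜 := ℝ) i).continuous.comp hξc).abs
  have hinnerc : Continuous fun s => ⟪η₂ s, Γ₂d s⟫ := hηc.inner hΓc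
  have hSηc : Continuous fun s => ∑ i, |η₂ s i| := by
    apply continuous_finset_sum
    exact fun i _ => hηic i
  have hSξc : Continuous fun s => ∑ i, |ξ₄ s i| := by
    apply continuous_finset_sum
    exact fun i _ => hξic i
  -- split the integral of R₂
  have hIR : ∫ s in (0:ℝ)..t, R₂ s =
      (∫ s in (0:ℝ)..t, ⟪η₂ s, Γ₂d s⟫) - lam₂ * ∫ s in (0:ℝ)..t, ∑ i, |η₂ s i| := by
    have : (fun s => R₂ s) = fun s => ⟪η₂ s, Γ₂d s⟫ - lam₂ * ∑ i, |η₂ s i| :=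
      funext hR₂'
    rw [this, intervalIntegral.integral_sub (g := fun s => lam₂ * ∑ i, |η₂ s i|) (hinnerc.intervalIntegrable 0 t)
      ((continuous_const.mul hSηc).intervalIntegrable 0 t),
      intervalIntegral.integral_const_mul]
  -- integration by parts for ⟪η₂, Γ₂d⟫
  have hDder : ∀ s, HasDerivAt (fun s => ⟪ξ₄ s, Γ₂d s⟫)
      (⟪ξ₄ s, deriv Γ₂d s⟫ + ⟪deriv ξ₄ s, Γ₂d s⟫) s := by
    intro s
    exact HasDerivAt.inner ℝ (hξd s).hasDerivAt (hΓd s).hasDerivAt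
  have hinnersplit : ∀ s, ⟪η₂ s, Γ₂d s⟫ =
      (⟪ξ₄ s, deriv Γ₂d s⟫ + ⟪deriv ξ₄ s, Γ₂d s⟫) +
        (k₄ * ⟪ξ₄ s, Γ₂d s⟫ - ⟪ξ₄ s, deriv Γ₂d s⟫) := by
    intro s
    rw [hη₂ s, inner_add_left, real_inner_smul_left]
    ring
  have hDc : Continuous fun s => ⟪ξ₄ s, deriv Γ₂d s⟫ + ⟪deriv ξ₄ s, Γ₂d s⟫ :=
    (hξc.inner hΓ'c).add (hξ'c.inner hΓc)
  have hremc : Continuous fun s => k₄ * ⟪ξ₄ s, Γ₂d s⟫ - ⟪ξ₄ s, deriv Γ₂d s⟫ :=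
    (continuous_const.mul (hξc.inner hΓc)).sub (hξc.inner hΓ'c)
  have hIinner : ∫ s in (0:ℝ)..t, ⟪η₂ s, Γ₂d s⟫ =
      (⟪ξ₄ t, Γ₂d t⟫ - ⟪ξ₄ 0, Γ₂d 0⟫) +
        ∫ s in (0:ℝ)..t, (k₄ * ⟪ξ₄ s, Γ₂d s⟫ - ⟪ξ₄ s, deriv Γ₂d s⟫) := by
    have heq : (fun s => ⟪η₂ s, Γ₂d s⟫) = fun s =>
        (⟪ξ₄ s, deriv Γ₂d s⟫ + ⟪deriv ξ₄ s, Γ₂d s⟫) +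
          (k₄ * ⟪ξ₄ s, Γ₂d s⟫ - ⟪ξ₄ s, deriv Γ₂d s⟫) := funext hinnersplit
    rw [heq, intervalIntegral.integral_add (hDc.intervalIntegrable 0 t)
      (hremc.intervalIntegrable 0 t),
      intervalIntegral.integral_eq_sub_of_hasDerivAt (fun s _ => hDder s)
      (hDc.intervalIntegrable 0 t)]
  -- bound the remainder integrand
  have hrem_bnd : ∀ s ∈ Set.Icc (0:ℝ) t,
      k₄ * ⟪ξ₄ s, Γ₂d s⟫ - ⟪ξ₄ s, deriv Γ₂d s⟫ ≤ k₄ * lam₂ * ∑ i, |ξ₄ s i| := by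
    intro s hs
    have h1 : ⟪ξ₄ s, Γ₂d s⟫ ≤ ‖ξ₄ s‖ * κ₁ := by
      calc ⟪ξ₄ s, Γ₂d s⟫ ≤ ‖ξ₄ s‖ * ‖Γ₂d s‖ := real_inner_le_norm _ _
        _ ≤ ‖ξ₄ s‖ * κ₁ := mul_le_mul_of_nonneg_left (hΓ_bnd s hs.1) (norm_nonneg _)
    have h2 : -⟪ξ₄ s, deriv Γ₂d s⟫ ≤ ‖ξ₄ s‖ * κ₂ := by
      have := abs_real_inner_le_norm (ξ₄ s) (deriv Γ₂d s)
      have h3 := mul_le_mul_of_nonneg_left (hΓ'_bnd s hs.1) (norm_nonneg (ξ₄ s))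
      have h4 := neg_abs_le ⟪ξ₄ s, deriv Γ₂d s⟫
      linarith
    have h5 : ‖ξ₄ s‖ ≤ ∑ i, |ξ₄ s i| := norm_le_sum_abs (ξ₄ s)
    have h6 : k₄ * κ₁ + κ₂ ≤ k₄ * lam₂ := by
      have : k₄ * (κ₁ + κ₂ / k₄) ≤ k₄ * lam₂ := mul_le_mul_of_nonneg_left hlam₂ hk₄.le
      rw [mul_add, mul_div_cancel₀ _ hk₄.ne'] at this
      linarith
    have hnn : 0 ≤ ‖ξ₄ s‖ := norm_nonneg _
    nlinarith [mul_le_mul_of_nonneg_left h1 hk₄.le,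
      mul_le_mul_of_nonneg_left h6 hnn,
      mul_le_mul_of_nonneg_left h5 (mul_nonneg hk₄.le hlam_nonneg)]
  -- integral bound on remainder
  have hIrem : ∫ s in (0:ℝ)..t, (k₄ * ⟪ξ₄ s, Γ₂d s⟫ - ⟪ξ₄ s, deriv Γ₂d s⟫) ≤
      k₄ * lam₂ * ∫ s in (0:ℝ)..t, ∑ i, |ξ₄ s i| := by
    rw [← intervalIntegral.integral_const_mul]
    exact intervalIntegral.integral_mono_on ht (hremc.intervalIntegrable 0 t)
      ((continuous_const.mul hSξc).intervalIntegrable 0 t) hrem_bnd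
  -- sum of key inequalities
  have hIsumη : ∫ s in (0:ℝ)..t, ∑ i, |η₂ s i| = ∑ i, ∫ s in (0:ℝ)..t, |η₂ s i| :=
    intervalIntegral.integral_finset_sum fun i _ => (hηic i).intervalIntegrable 0 t
  have hIsumξ : ∫ s in (0:ℝ)..t, ∑ i, |ξ₄ s i| = ∑ i, ∫ s in (0:ℝ)..t, |ξ₄ s i| :=
    intervalIntegral.integral_finset_sum fun i _ => (hξic i).intervalIntegrable 0 t
  have hkeysum : (∑ i, |ξ₄ t i|) - (∑ i, |ξ₄ 0 i|) +
      k₄ * ∫ s in (0:ℝ)..t, ∑ i, |ξ₄ s i| ≤ ∫ s in (0:ℝ)..t, ∑ i, |η₂ s i| := by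
    rw [hIsumη, hIsumξ, Finset.mul_sum, ← Finset.sum_sub_distrib, ← Finset.sum_add_distrib]
    exact Finset.sum_le_sum fun i _ => hkey i
  -- final endpoint bound
  have hend : ⟪ξ₄ t, Γ₂d t⟫ ≤ lam₂ * ∑ i, |ξ₄ t i| := by
    have h1 : ⟪ξ₄ t, Γ₂d t⟫ ≤ ‖ξ₄ t‖ * κ₁ := by
      calc ⟪ξ₄ t, Γ₂d t⟫ ≤ ‖ξ₄ t‖ * ‖Γ₂d t‖ := real_inner_le_norm _ _
        _ ≤ ‖ξ₄ t‖ * κ₁ := mul_le_mul_of_nonneg_left (hΓ_bnd t ht) (norm_nonneg _)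
    have h5 : ‖ξ₄ t‖ ≤ ∑ i, |ξ₄ t i| := norm_le_sum_abs (ξ₄ t)
    have hκle : κ₁ ≤ lam₂ := by
      have : 0 ≤ κ₂ / k₄ := div_nonneg hκ₂ hk₄.le
      linarith
    have hSnn : 0 ≤ ∑ i, |ξ₄ t i| := Finset.sum_nonneg fun i _ => abs_nonneg _
    nlinarith [mul_le_mul_of_nonneg_right h5 hκ₁,
      mul_le_mul_of_nonneg_right hκle hSnn]
  -- assemble everything
  have hmul : lam₂ * ((∑ i, |ξ₄ t i|) - (∑ i, |ξ₄ 0 i|) +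
      k₄ * ∫ s in (0:ℝ)..t, ∑ i, |ξ₄ s i|) ≤
      lam₂ * ∫ s in (0:ℝ)..t, ∑ i, |η₂ s i| :=
    mul_le_mul_of_nonneg_left hkeysum hlam_nonneg
  rw [hIR, hIinner]
  nlinarith [hIrem, hmul, hend]
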